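/- arXiv:math-ph/0602058 — 3 statements merged into one kernel-verified Lean document; each statement's English description precedes it below -/
import Mathlib

section
/- Let Φ₀(f) = (1+f)ln(1+f) − f and let f₀, f ≥ 0 with f₀, f ≤ M for some constant M ≥ 0. If E − E₀ ≥ −Φ₀'(f₀) pointwise with equality wherever f₀ > 0, then pointwise Φ₀(f) − Φ₀(f₀) + (E − E₀)(f − f₀) ≥ (1/(2(1+M)))·(f − f₀)². -/
open Real

private lemma logContOn (c : ℝ) : ContinuousOn Real.log (Set.Icc 1 c) := by
  apply Real.continuousOn_log.mono
  intro x hx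
  simp only [Set.mem_compl_iff, Set.mem_singleton_iff]
  intro h
  rw [h] at hx
  exact absurd hx.1 (by norm_num)

private lemma hasDerivAt_phi (a c b : ℝ) (hb : 0 < b) :
    HasDerivAt (fun x => Real.log x - Real.log a - (x - a) / c) (1 / b - 1 / c) b := by
  have h1 : HasDerivAt (fun x : ℝ => Real.log x) (1 / b) b := by
    simpa [one_div] using Real.hasDerivAt_log hb.ne'
  have h2 : HasDerivAt (fun x : ℝ => (x - a) / c) (1 / c) b := by
    have : HasDerivAt (fun x : ℝ => (x - a)) 1 b := (hasDerivAt_id b).sub_const a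
    simpa [div_eq_mul_inv, one_div] using this.div_const c
  simpa using (h1.sub_const (Real.log a)).fun_sub h2

private lemma hasDerivAt_psi (a c b : ℝ) (hb : 0 < b) (hc : c ≠ 0) :
    HasDerivAt (fun x => x * (Real.log x - Real.log a) - (x - a) - (x - a) ^ 2 / (2 * c))
      (Real.log b - Real.log a - (b - a) / c) b := by
  have h1 : HasDerivAt (fun x : ℝ => x * (Real.log x - Real.log a))
      (1 * (Real.log b - Real.log a) + b * b⁻¹) b :=
    (hasDerivAt_id b).mul ((Real.hasDerivAt_log hb.ne').sub_const (Real.log a))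
  have h2 : HasDerivAt (fun x : ℝ => (x - a)) 1 b := (hasDerivAt_id b).sub_const a
  have h3 : HasDerivAt (fun x : ℝ => (x - a) ^ 2 / (2 * c)) (2 * (b - a) / (2 * c)) b := by
    have : HasDerivAt (fun x : ℝ => (x - a) ^ 2) (2 * (b - a)) b := by
      simpa [mul_comm] using (h2.fun_pow 2)
    simpa [div_eq_mul_inv] using this.div_const (2 * c)
  have h := (h1.sub h2).sub h3
  have hb' : b * b⁻¹ = 1 := mul_inv_cancel₀ hb.ne'
  have harith : 1 * (Real.log b - Real.log a) + b * b⁻¹ - 1 - 2 * (b - a) / (2 * c)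
      = Real.log b - Real.log a - (b - a) / c := by
    rw [hb']; field_simp; ring
  rwa [harith] at h

private lemma key_ineq (a b c : ℝ) (ha1 : 1 ≤ a) (hac : a ≤ c) (hb1 : 1 ≤ b) (hbc : b ≤ c) :
    b * (Real.log b - Real.log a) - (b - a) ≥ (b - a) ^ 2 / (2 * c) := by
  have hc1 : (1:ℝ) ≤ c := le_trans ha1 hac
  have hc0 : (0:ℝ) < c := lt_of_lt_of_le one_pos hc1
  set φ : ℝ → ℝ := fun x => Real.log x - Real.log a - (x - a) / c with hφ
  set ψ : ℝ → ℝ := fun x => x * (Real.log x - Real.log a) - (x - a) - (x - a) ^ 2 / (2 * c)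
    with hψ
  have hφmono : MonotoneOn φ (Set.Icc 1 c) := by
    apply monotoneOn_of_deriv_nonneg (convex_Icc 1 c)
    · exact ((logContOn c).sub continuousOn_const).sub
        (((continuousOn_id.sub continuousOn_const)).div_const c)
    · intro x hx
      rw [interior_Icc] at hx
      exact (hasDerivAt_phi a c x (lt_of_lt_of_le one_pos hx.1.le)).differentiableAt.differentiableWithinAt
    · intro x hx
      rw [interior_Icc] at hx
      have hx0 : 0 < x := lt_of_lt_of_le one_pos hx.1.le
      rw [(hasDerivAt_phi a c x hx0).deriv]
      have : 1 / c ≤ 1 / x := one_div_le_one_div_of_le hx0 hx.2.le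
      linarith
  have hφa : φ a = 0 := by simp [hφ]
  have haI : a ∈ Set.Icc (1:ℝ) c := ⟨ha1, hac⟩
  have hψcont : ContinuousOn ψ (Set.Icc 1 c) := by
    apply ContinuousOn.sub (ContinuousOn.sub ?_ (by fun_prop))
      (ContinuousOn.div_const (by fun_prop) (2 * c))
    exact continuousOn_id.mul ((logContOn c).sub continuousOn_const)
  have hψdiff : ∀ x ∈ interior (Set.Icc (1:ℝ) c), DifferentiableAt ℝ ψ x := by
    intro x hx
    rw [interior_Icc] at hx
    exact (hasDerivAt_psi a c x (lt_of_lt_of_le one_pos hx.1.le) hc0.ne').differentiableAt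
  have hψa : ψ a = 0 := by simp [hψ]
  have hψb : 0 ≤ ψ b := by
    rcases le_total a b with hab | hba
    · have hmono : MonotoneOn ψ (Set.Icc a c) := by
        apply monotoneOn_of_deriv_nonneg (convex_Icc a c)
        · exact hψcont.mono (Set.Icc_subset_Icc_left ha1)
        · intro x hx
          rw [interior_Icc] at hx
          exact (hψdiff x (by rw [interior_Icc]; exact ⟨lt_of_le_of_lt ha1 hx.1, hx.2⟩)).differentiableWithinAt
        · intro x hx
          rw [interior_Icc] at hx
          have hx0 : 0 < x := lt_of_lt_of_le one_pos (le_trans ha1 hx.1.le)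
          rw [(hasDerivAt_psi a c x hx0 hc0.ne').deriv]
          have h := hφmono haI ⟨le_trans ha1 hx.1.le, hx.2.le⟩ hx.1.le
          rw [hφa] at h
          simpa [hφ] using h
      have := hmono ⟨le_refl a, hac⟩ ⟨hab, hbc⟩ hab
      rwa [hψa] at this
    · have hanti : AntitoneOn ψ (Set.Icc 1 a) := by
        apply antitoneOn_of_deriv_nonpos (convex_Icc 1 a)
        · exact hψcont.mono (Set.Icc_subset_Icc_right hac)
        · intro x hx
          rw [interior_Icc] at hx
          exact (hψdiff x (by rw [interior_Icc]; exact ⟨hx.1, lt_of_lt_of_le hx.2 hac⟩)).differentiableWithinAt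
        · intro x hx
          rw [interior_Icc] at hx
          have hx0 : 0 < x := lt_of_lt_of_le one_pos hx.1.le
          rw [(hasDerivAt_psi a c x hx0 hc0.ne').deriv]
          have h := hφmono ⟨hx.1.le, le_trans hx.2.le hac⟩ haI hx.2.le
          rw [hφa] at h
          simpa [hφ] using h
      have := hanti ⟨hb1, hba⟩ ⟨ha1, le_refl a⟩ hba
      rwa [hψa] at this
  have : 0 ≤ b * (Real.log b - Real.log a) - (b - a) - (b - a) ^ 2 / (2 * c) := hψb
  linarith

/-- Pointwise convexity estimate: if `E − E₀ ≥ −Φ₀'(f₀)` with equality where `f₀ > 0`, then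
`Φ₀(f) − Φ₀(f₀) + (E − E₀)(f − f₀) ≥ (f − f₀)²/(2(1+M))` for `0 ≤ f₀, f ≤ M`. -/
theorem casimir_convexity_estimate
    (Φ₀ : ℝ → ℝ) (hΦ₀ : ∀ s : ℝ, Φ₀ s = (1 + s) * Real.log (1 + s) - s)
    (M : ℝ) (hM : 0 ≤ M)
    (f₀ f E E₀ : ℝ)
    (hf₀ : 0 ≤ f₀) (hf₀M : f₀ ≤ M) (hf : 0 ≤ f) (hfM : f ≤ M)
    (hineq : E - E₀ ≥ -Real.log (1 + f₀))
    (heq : 0 < f₀ → E - E₀ = -Real.log (1 + f₀)) :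
    Φ₀ f - Φ₀ f₀ + (E - E₀) * (f - f₀) ≥ (1 / (2 * (1 + M))) * (f - f₀) ^ 2 := by
  set a := 1 + f₀ with ha
  set b := 1 + f with hb
  set c := 1 + M with hc
  have hkey := key_ineq a b c (by linarith) (by linarith) (by linarith) (by linarith)
  have hextra : 0 ≤ (E - E₀ + Real.log a) * (f - f₀) := by
    rcases eq_or_lt_of_le hf₀ with h0 | h0
    · have hla : Real.log a = 0 := by rw [ha, ← h0]; simp
      rw [hla] at hineq ⊢
      have h1 : 0 ≤ E - E₀ := by linarith [hineq]
      have h2 : 0 ≤ f - f₀ := by rw [← h0]; linarith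
      nlinarith
    · have : E - E₀ + Real.log a = 0 := by rw [heq h0]; ring
      rw [this, zero_mul]
  have hexpand : Φ₀ f - Φ₀ f₀ + (E - E₀) * (f - f₀)
      = b * (Real.log b - Real.log a) - (b - a) + (E - E₀ + Real.log a) * (f - f₀) := by
    rw [hΦ₀ f, hΦ₀ f₀, ha, hb]; ring
  rw [hexpand]
  have hq : (1 / (2 * c)) * (f - f₀) ^ 2 = (b - a) ^ 2 / (2 * c) := by
    rw [ha, hb]; ring
  rw [hc] at hq
  rw [hq]
  linarith
end

section
/- Let Ψ : [r₋, r₊] → ℝ be C¹ with Ψ(r₋) = Ψ(r₊) = E, Ψ(r) < E for r₋ < r < r₊, Ψ strictly decreasing on [r₋, r*] and strictly increasing on [r*, r₊] where Ψ attains its minimum at r*. Suppose there exists η > 0 such that |Ψ'(r)| ≥ η √(Ψ(r) − Ψ(r*)) for all r ∈ [r₋, r₊]. Then ∫_{r₋}^{r₊} dr/√(2E − 2Ψ(r)) ≤ (2√2/η) ∫₀¹ ds/√(1−s²) = √2 π/η < ∞. -/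
open Real Set MeasureTheory
open scoped ENNReal

/-- One-dimensional change of variables for the Lebesgue (lower) integral. -/
lemma lintegral_image_1d {s : Set ℝ} {f f' : ℝ → ℝ} (hs : MeasurableSet s)
    (hf' : ∀ x ∈ s, HasDerivWithinAt f (f' x) s x) (hf : InjOn f s) (g : ℝ → ℝ≥0∞) :
    ∫⁻ x in f '' s, g x = ∫⁻ x in s, ENNReal.ofReal |f' x| * g (f x) := by
  simpa only [ContinuousLinearMap.det_toSpanSingleton] using
    lintegral_image_eq_lintegral_abs_det_fderiv_mul volume hs
      (fun x hx => (hf' x hx).hasFDerivWithinAt) hf g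

lemma lint_Ioo_bound_aux {b t : ℝ} (hb : 0 < b) (htb : t < b) :
    ∫⁻ u in Ioo 0 t, ENNReal.ofReal (1 / Real.sqrt (b ^ 2 - u ^ 2)) ≤
      ENNReal.ofReal (π / 2) := by
  rcases le_or_gt t 0 with ht | ht
  · rw [Ioo_eq_empty (by linarith), Measure.restrict_empty, lintegral_zero_measure]
    exact zero_le
  · have hcont : ContinuousOn (fun u : ℝ => 1 / Real.sqrt (b ^ 2 - u ^ 2)) (Icc 0 t) := by
      apply ContinuousOn.div continuousOn_const
      · exact (Real.continuous_sqrt.comp (by continuity)).continuousOn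
      · intro u hu
        exact Real.sqrt_ne_zero'.mpr (by nlinarith [hu.1, hu.2])
    have hint : IntegrableOn (fun u : ℝ => 1 / Real.sqrt (b ^ 2 - u ^ 2)) (Ioo 0 t) :=
      (hcont.integrableOn_Icc).mono_set Ioo_subset_Icc_self
    rw [← ofReal_integral_eq_lintegral_ofReal hint (ae_of_all _ fun u => by positivity)]
    apply ENNReal.ofReal_le_ofReal
    have hderiv : ∀ u ∈ uIcc 0 t, HasDerivAt (fun v : ℝ => Real.arcsin (v / b))
        (1 / Real.sqrt (b ^ 2 - u ^ 2)) u := by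
      intro u hu
      rw [uIcc_of_le ht.le] at hu
      have hub : u / b < 1 := (div_lt_one hb).mpr (lt_of_le_of_lt hu.2 htb)
      have hub' : (0:ℝ) ≤ u / b := div_nonneg hu.1 hb.le
      have h1 : HasDerivAt (fun v : ℝ => v / b) (1 / b) u := by
        simpa using (hasDerivAt_id u).div_const b
      have h2 := (Real.hasDerivAt_arcsin
        (by linarith : u / b ≠ -1) (ne_of_lt hub)).comp u h1
      have hbu : Real.sqrt (b ^ 2 - u ^ 2) = b * Real.sqrt (1 - (u / b) ^ 2) := by
        have he : b ^ 2 * (1 - (u / b) ^ 2) = b ^ 2 - u ^ 2 := by field_simp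
        rw [← he, Real.sqrt_mul (sq_nonneg b), Real.sqrt_sq hb.le]
      have hval : 1 / Real.sqrt (1 - (u / b) ^ 2) * (1 / b) =
          1 / Real.sqrt (b ^ 2 - u ^ 2) := by
        rw [hbu, div_mul_div_comm, one_mul, mul_comm]
      have h3 : HasDerivAt (fun v : ℝ => Real.arcsin (v / b))
          (1 / Real.sqrt (1 - (u / b) ^ 2) * (1 / b)) u := by
        simpa [Function.comp_def] using h2
      rw [hval] at h3
      exact h3
    have hii : IntervalIntegrable (fun u : ℝ => 1 / Real.sqrt (b ^ 2 - u ^ 2)) volume 0 t :=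
      ContinuousOn.intervalIntegrable (by rwa [uIcc_of_le ht.le])
    have hval := intervalIntegral.integral_eq_sub_of_hasDerivAt hderiv hii
    rw [← integral_Ioc_eq_integral_Ioo, ← intervalIntegral.integral_of_le ht.le, hval]
    simp only [zero_div, Real.arcsin_zero, sub_zero]
    exact Real.arcsin_le_pi_div_two _

lemma lint_Ioo_bound {b : ℝ} (hb : 0 < b) :
    ∫⁻ u in Ioo 0 b, ENNReal.ofReal (1 / Real.sqrt (b ^ 2 - u ^ 2)) ≤
      ENNReal.ofReal (π / 2) := by
  have hc : ∀ n : ℕ, b - b / (n + 2) < b := by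
    intro n
    have : 0 < b / ((n:ℝ) + 2) := div_pos hb (by positivity)
    linarith
  have hmono : Monotone fun n : ℕ => b - b / ((n:ℝ) + 2) := by
    intro m n hmn
    have h2 : ((m:ℝ) + 2) ≤ ((n:ℝ) + 2) := by
      have : (m:ℝ) ≤ n := Nat.cast_le.mpr hmn
      linarith
    have := div_le_div_of_nonneg_left hb.le (by positivity : (0:ℝ) < (m:ℝ) + 2) h2
    simp only
    linarith
  have hU : Ioo (0:ℝ) b = ⋃ n : ℕ, Ioo 0 (b - b / ((n:ℝ) + 2)) := by
    ext x
    simp only [mem_Ioo, mem_iUnion]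
    constructor
    · rintro ⟨hx0, hxb⟩
      obtain ⟨n, hn⟩ := exists_nat_gt (b / (b - x))
      refine ⟨n, hx0, ?_⟩
      have hbx : 0 < b - x := by linarith
      have h1 : b < (n:ℝ) * (b - x) := by
        have := (div_lt_iff₀ hbx).mp hn
        linarith
      have h2 : b < ((n:ℝ) + 2) * (b - x) := by nlinarith
      have h3 : b / ((n:ℝ) + 2) < b - x := (div_lt_iff₀ (by positivity)).mpr (by linarith)
      linarith
    · rintro ⟨n, hx0, hxn⟩
      exact ⟨hx0, lt_trans hxn (hc n)⟩
  rw [hU, setLIntegral_iUnion_of_directed]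
  · exact iSup_le fun n => lint_Ioo_bound_aux hb (hc n)
  · exact Monotone.directed_le fun m n h => Ioo_subset_Ioo_right (hmono h)

/-- The one-sided bound used on each monotone branch of `Ψ`. -/
lemma half_bound (Ψ : ℝ → ℝ) (a b C E η : ℝ) (hη : 0 < η)
    (hd : ∀ r ∈ Ioo a b, HasDerivAt Ψ (deriv Ψ r) r)
    (hgt : ∀ r ∈ Ioo a b, C < Ψ r)
    (hltE : ∀ r ∈ Ioo a b, Ψ r < E)
    (hCE : C < E)
    (hgrad : ∀ r ∈ Ioo a b, η * Real.sqrt (Ψ r - C) ≤ |deriv Ψ r|)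
    (hinjΨ : InjOn Ψ (Ioo a b)) :
    ∫⁻ r in Ioo a b, ENNReal.ofReal (1 / Real.sqrt (2 * E - 2 * Ψ r)) ≤
      ENNReal.ofReal (2 / η * ((Real.sqrt 2)⁻¹ * (π / 2))) := by
  have hgd : ∀ r ∈ Ioo a b, HasDerivWithinAt (fun r => Real.sqrt (Ψ r - C))
      (1 / (2 * Real.sqrt (Ψ r - C)) * deriv Ψ r) (Ioo a b) r := by
    intro r hr
    have h0 : Ψ r - C ≠ 0 := ne_of_gt (sub_pos.mpr (hgt r hr))
    have h1 : HasDerivAt (fun r => Ψ r - C) (deriv Ψ r) r := (hd r hr).sub_const C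
    have h2 := (Real.hasDerivAt_sqrt h0).comp r h1
    exact (HasDerivAt.hasDerivWithinAt (by simpa [Function.comp_def] using h2))
  have hinj : InjOn (fun r => Real.sqrt (Ψ r - C)) (Ioo a b) := by
    intro r1 h1 r2 h2 heq
    apply hinjΨ h1 h2
    have e1 := Real.sq_sqrt (sub_pos.mpr (hgt r1 h1)).le
    have e2 := Real.sq_sqrt (sub_pos.mpr (hgt r2 h2)).le
    have : Ψ r1 - C = Ψ r2 - C := by
      rw [← e1, ← e2]; simp only at heq; rw [heq]
    linarith
  set F : ℝ → ℝ≥0∞ := fun u => ENNReal.ofReal (1 / Real.sqrt (2 * E - 2 * C - 2 * u ^ 2))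
    with hF
  have key : ∀ r ∈ Ioo a b, ENNReal.ofReal (1 / Real.sqrt (2 * E - 2 * Ψ r)) ≤
      ENNReal.ofReal (2 / η) *
        (ENNReal.ofReal |1 / (2 * Real.sqrt (Ψ r - C)) * deriv Ψ r| *
          F (Real.sqrt (Ψ r - C))) := by
    intro r hr
    have hx : 0 < Ψ r - C := sub_pos.mpr (hgt r hr)
    have hs : 0 < Real.sqrt (Ψ r - C) := Real.sqrt_pos.mpr hx
    have habs : |1 / (2 * Real.sqrt (Ψ r - C)) * deriv Ψ r| =
        |deriv Ψ r| / (2 * Real.sqrt (Ψ r - C)) := by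
      rw [abs_mul, abs_of_pos (by positivity : (0:ℝ) < 1 / (2 * Real.sqrt (Ψ r - C)))]
      ring
    have hge : η / 2 ≤ |1 / (2 * Real.sqrt (Ψ r - C)) * deriv Ψ r| := by
      rw [habs, le_div_iff₀ (by positivity)]
      calc η / 2 * (2 * Real.sqrt (Ψ r - C)) = η * Real.sqrt (Ψ r - C) := by ring
        _ ≤ |deriv Ψ r| := hgrad r hr
    have h1 : (1:ℝ) ≤ 2 / η * |1 / (2 * Real.sqrt (Ψ r - C)) * deriv Ψ r| := by
      rw [div_mul_eq_mul_div, le_div_iff₀ hη]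
      linarith
    have harg : 2 * E - 2 * C - 2 * Real.sqrt (Ψ r - C) ^ 2 = 2 * E - 2 * Ψ r := by
      rw [Real.sq_sqrt hx.le]; ring
    have hFeq : F (Real.sqrt (Ψ r - C)) =
        ENNReal.ofReal (1 / Real.sqrt (2 * E - 2 * Ψ r)) := by
      simp only [hF, harg]
    rw [hFeq, ← mul_assoc, ← ENNReal.ofReal_mul (by positivity : (0:ℝ) ≤ 2 / η)]
    exact le_mul_of_one_le_left zero_le (ENNReal.one_le_ofReal.mpr h1)
  have himg : (fun r => Real.sqrt (Ψ r - C)) '' Ioo a b ⊆ Ioo 0 (Real.sqrt (E - C)) := by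
    rintro _ ⟨r, hr, rfl⟩
    exact ⟨Real.sqrt_pos.mpr (sub_pos.mpr (hgt r hr)),
      Real.sqrt_lt_sqrt (sub_pos.mpr (hgt r hr)).le (by linarith [hltE r hr])⟩
  have hB : (0:ℝ) < Real.sqrt (E - C) := Real.sqrt_pos.mpr (sub_pos.mpr hCE)
  have hFbound : ∫⁻ u in Ioo 0 (Real.sqrt (E - C)), F u ≤
      ENNReal.ofReal (Real.sqrt 2)⁻¹ * ENNReal.ofReal (π / 2) := by
    have hEC : Real.sqrt (E - C) ^ 2 = E - C := Real.sq_sqrt (sub_pos.mpr hCE).le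
    have heq : ∀ u ∈ Ioo (0:ℝ) (Real.sqrt (E - C)), F u =
        ENNReal.ofReal (Real.sqrt 2)⁻¹ *
          ENNReal.ofReal (1 / Real.sqrt (Real.sqrt (E - C) ^ 2 - u ^ 2)) := by
      intro u _
      have h2 : 2 * E - 2 * C - 2 * u ^ 2 = 2 * (Real.sqrt (E - C) ^ 2 - u ^ 2) := by
        rw [hEC]; ring
      simp only [hF, h2]
      rw [← ENNReal.ofReal_mul (by positivity)]
      congr 1
      rw [Real.sqrt_mul (by norm_num : (0:ℝ) ≤ 2)]
      ring
    rw [setLIntegral_congr_fun measurableSet_Ioo heq,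
      lintegral_const_mul' _ _ ENNReal.ofReal_ne_top]
    exact mul_le_mul_right (lint_Ioo_bound hB) _
  calc ∫⁻ r in Ioo a b, ENNReal.ofReal (1 / Real.sqrt (2 * E - 2 * Ψ r))
      ≤ ∫⁻ r in Ioo a b, ENNReal.ofReal (2 / η) *
          (ENNReal.ofReal |1 / (2 * Real.sqrt (Ψ r - C)) * deriv Ψ r| *
            F (Real.sqrt (Ψ r - C))) :=
        lintegral_mono_ae ((ae_restrict_iff' measurableSet_Ioo).mpr (ae_of_all _ key))
    _ = ENNReal.ofReal (2 / η) * ∫⁻ r in Ioo a b,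
          ENNReal.ofReal |1 / (2 * Real.sqrt (Ψ r - C)) * deriv Ψ r| *
            F (Real.sqrt (Ψ r - C)) :=
        lintegral_const_mul' _ _ ENNReal.ofReal_ne_top
    _ = ENNReal.ofReal (2 / η) *
          ∫⁻ u in (fun r => Real.sqrt (Ψ r - C)) '' Ioo a b, F u := by
        rw [lintegral_image_1d measurableSet_Ioo hgd hinj F]
    _ ≤ ENNReal.ofReal (2 / η) * ∫⁻ u in Ioo 0 (Real.sqrt (E - C)), F u :=
        mul_le_mul_right (lintegral_mono_set himg) _
    _ ≤ ENNReal.ofReal (2 / η) *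
          (ENNReal.ofReal (Real.sqrt 2)⁻¹ * ENNReal.ofReal (π / 2)) :=
        mul_le_mul_right hFbound _
    _ = ENNReal.ofReal (2 / η * ((Real.sqrt 2)⁻¹ * (π / 2))) := by
        rw [← ENNReal.ofReal_mul (by positivity : (0:ℝ) ≤ (Real.sqrt 2)⁻¹),
          ← ENNReal.ofReal_mul (by positivity : (0:ℝ) ≤ 2 / η)]

/-- Bound on the radial period integral: if `Ψ` is `C¹` on `[r₋, r₊]` with
`Ψ(r₋) = Ψ(r₊) = E`, `Ψ < E` inside, strictly decreasing then increasing around its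
minimum point `r*`, and `|Ψ'(r)| ≥ η √(Ψ(r) − Ψ(r*))`, then
`∫_{r₋}^{r₊} dr/√(2E − 2Ψ(r)) ≤ √2 π/η < ∞`. -/
theorem period_integral_bound
    (Ψ : ℝ → ℝ) (rm rp rs E η : ℝ)
    (hrm : rm < rs) (hrp : rs < rp) (hη : 0 < η)
    (hC1 : ContDiffOn ℝ 1 Ψ (Icc rm rp))
    (hEm : Ψ rm = E) (hEp : Ψ rp = E)
    (hlt : ∀ r, rm < r → r < rp → Ψ r < E)
    (hmin : ∀ r ∈ Icc rm rp, Ψ rs ≤ Ψ r)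
    (hdec : StrictAntiOn Ψ (Icc rm rs))
    (hinc : StrictMonoOn Ψ (Icc rs rp))
    (hgrad : ∀ r ∈ Icc rm rp, η * Real.sqrt (Ψ r - Ψ rs) ≤ |deriv Ψ r|) :
    ∫⁻ r in Ioo rm rp, ENNReal.ofReal (1 / Real.sqrt (2 * E - 2 * Ψ r)) ≤
      ENNReal.ofReal (Real.sqrt 2 * π / η) := by
  have hΨrs : Ψ rs < E := hlt rs hrm hrp
  have hd : ∀ r ∈ Ioo rm rp, HasDerivAt Ψ (deriv Ψ r) r := by
    intro r hr
    have h1 : DifferentiableWithinAt ℝ Ψ (Icc rm rp) r :=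
      (hC1.differentiableOn one_ne_zero) r (mem_Icc_of_Ioo hr)
    exact (h1.differentiableAt (Icc_mem_nhds hr.1 hr.2)).hasDerivAt
  have hdisj : Disjoint (Ioo rm rs) (Ico rs rp) := by
    apply Set.disjoint_left.mpr
    rintro x ⟨_, h1⟩ ⟨h2, _⟩
    exact absurd h2 (not_le.mpr h1)
  have hsplit : Ioo rm rp = Ioo rm rs ∪ Ico rs rp := (Ioo_union_Ico_eq_Ioo hrm hrp.le).symm
  rw [hsplit, lintegral_union measurableSet_Ico hdisj]
  have hleft : ∫⁻ r in Ioo rm rs, ENNReal.ofReal (1 / Real.sqrt (2 * E - 2 * Ψ r)) ≤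
      ENNReal.ofReal (2 / η * ((Real.sqrt 2)⁻¹ * (π / 2))) := by
    apply half_bound Ψ rm rs (Ψ rs) E η hη
    · exact fun r hr => hd r ⟨hr.1, hr.2.trans hrp⟩
    · exact fun r hr => hdec ⟨hr.1.le, hr.2.le⟩ ⟨hrm.le, le_rfl⟩ hr.2
    · exact fun r hr => hlt r hr.1 (hr.2.trans hrp)
    · exact hΨrs
    · exact fun r hr => hgrad r ⟨hr.1.le, (hr.2.trans hrp).le⟩
    · exact hdec.injOn.mono Ioo_subset_Icc_self
  have hright : ∫⁻ r in Ico rs rp, ENNReal.ofReal (1 / Real.sqrt (2 * E - 2 * Ψ r)) ≤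
      ENNReal.ofReal (2 / η * ((Real.sqrt 2)⁻¹ * (π / 2))) := by
    rw [show (volume : Measure ℝ).restrict (Ico rs rp) = volume.restrict (Ioo rs rp) from
      (Measure.restrict_congr_set Ioo_ae_eq_Ico).symm]
    apply half_bound Ψ rs rp (Ψ rs) E η hη
    · exact fun r hr => hd r ⟨hrm.trans hr.1, hr.2⟩
    · exact fun r hr => hinc ⟨le_rfl, hrp.le⟩ ⟨hr.1.le, hr.2.le⟩ hr.1
    · exact fun r hr => hlt r (hrm.trans hr.1) hr.2
    · exact hΨrs
    · exact fun r hr => hgrad r ⟨(hrm.trans hr.1).le, hr.2.le⟩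
    · exact hinc.injOn.mono Ioo_subset_Icc_self
  calc (∫⁻ r in Ioo rm rs, ENNReal.ofReal (1 / Real.sqrt (2 * E - 2 * Ψ r))) +
        ∫⁻ r in Ico rs rp, ENNReal.ofReal (1 / Real.sqrt (2 * E - 2 * Ψ r))
      ≤ ENNReal.ofReal (2 / η * ((Real.sqrt 2)⁻¹ * (π / 2))) +
        ENNReal.ofReal (2 / η * ((Real.sqrt 2)⁻¹ * (π / 2))) := add_le_add hleft hright
    _ = ENNReal.ofReal (2 / η * ((Real.sqrt 2)⁻¹ * (π / 2)) +
          2 / η * ((Real.sqrt 2)⁻¹ * (π / 2))) :=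
        (ENNReal.ofReal_add (by positivity) (by positivity)).symm
    _ ≤ ENNReal.ofReal (Real.sqrt 2 * π / η) := by
        apply ENNReal.ofReal_le_ofReal
        have hs2 : Real.sqrt 2 * Real.sqrt 2 = 2 := Real.mul_self_sqrt (by norm_num)
        have hs0 : (0:ℝ) < Real.sqrt 2 := Real.sqrt_pos.mpr (by norm_num)
        have heq : 2 / η * ((Real.sqrt 2)⁻¹ * (π / 2)) +
            2 / η * ((Real.sqrt 2)⁻¹ * (π / 2)) = Real.sqrt 2 * π / η := by
          have h : (Real.sqrt 2)⁻¹ = Real.sqrt 2 / 2 := by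
            field_simp
            exact (Real.sq_sqrt (by norm_num)).symm
          rw [h]
          field_simp
          ring
        rw [heq]
end

section
/- Let f_n = f₀ + σ_n g_n with σ_n > 0, σ_n → 0, f₀, f_n ≥ 0, (g_n) bounded in L²(ℝ⁶), and g_n → g strongly in L²(ℝ⁶). Let Φ : [0,∞)² → ℝ be C² with bounded ∂_f²Φ, and suppose ∂_fΦ(f₀(·), L(·)) is bounded with compact support, and ∫∫ Φ(f_n, L) = ∫∫ Φ(f₀, L) for each n. Then ∫∫ ∂_fΦ(f₀, L) g dv dx = 0. -/
open Real MeasureTheory Filter Topology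

/-- Pointwise Taylor estimate: if `∂²Φ/∂f²` is bounded by `B` on the nonnegative
half-line, then `|Φ(b,l) - Φ(a,l) - D(a,l)(b-a)| ≤ B (b-a)²` for `a, b, l ≥ 0`. -/
private lemma taylor_bd {Φ D D2 : ℝ → ℝ → ℝ}
    (hD : ∀ l ≥ (0:ℝ), ∀ s ≥ (0:ℝ), HasDerivAt (fun t => Φ t l) (D s l) s)
    (hD2 : ∀ l ≥ (0:ℝ), ∀ s ≥ (0:ℝ), HasDerivAt (fun t => D t l) (D2 s l) s)
    {B : ℝ} (hD2bd : ∀ l ≥ (0:ℝ), ∀ s ≥ (0:ℝ), |D2 s l| ≤ B)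
    {l a b : ℝ} (hl : 0 ≤ l) (ha : 0 ≤ a) (hb : 0 ≤ b) :
    |Φ b l - Φ a l - D a l * (b - a)| ≤ B * (b - a) ^ 2 := by
  have hB : 0 ≤ B := le_trans (abs_nonneg _) (hD2bd 0 le_rfl 0 le_rfl)
  have hsub : Set.uIcc a b ⊆ Set.Ici (0 : ℝ) := by
    intro t ht
    rw [Set.mem_uIcc] at ht
    rcases ht with ⟨h1, _⟩ | ⟨h1, _⟩ <;> exact le_trans (by assumption) h1
  -- Lipschitz estimate for `D` on the segment
  have Dlip : ∀ t ∈ Set.uIcc a b, |D t l - D a l| ≤ B * |b - a| := by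
    intro t ht
    have h1 : ‖D t l - D a l‖ ≤ B * ‖t - a‖ :=
      Convex.norm_image_sub_le_of_norm_hasDerivWithin_le
        (f := fun t => D t l) (f' := fun t => D2 t l)
        (fun s hs => (hD2 l hl s hs).hasDerivWithinAt)
        (fun s hs => by simpa [Real.norm_eq_abs] using hD2bd l hl s hs)
        (convex_Ici 0) ha (hsub ht)
    have h2 : |t - a| ≤ |b - a| := Set.abs_sub_left_of_mem_uIcc ht
    calc |D t l - D a l| ≤ B * |t - a| := by simpa [Real.norm_eq_abs] using h1
      _ ≤ B * |b - a| := mul_le_mul_of_nonneg_left h2 hB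
  -- mean value estimate for `t ↦ Φ t l - t * D a l`
  have key : ‖(Φ b l - b * D a l) - (Φ a l - a * D a l)‖ ≤ B * |b - a| * ‖b - a‖ :=
    Convex.norm_image_sub_le_of_norm_hasDerivWithin_le
      (f := fun t => Φ t l - t * D a l) (f' := fun t => D t l - D a l)
      (fun t ht => ((hD l hl t (hsub ht)).sub (hasDerivAt_mul_const (D a l))).hasDerivWithinAt)
      (fun t ht => by simpa [Real.norm_eq_abs] using Dlip t ht)
      (convex_uIcc a b) Set.left_mem_uIcc Set.right_mem_uIcc
  have habs : |b - a| * |b - a| = (b - a) ^ 2 := by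
    rw [← abs_mul, sq, abs_mul_self]
  calc |Φ b l - Φ a l - D a l * (b - a)|
      = ‖(Φ b l - b * D a l) - (Φ a l - a * D a l)‖ := by
        rw [Real.norm_eq_abs]; ring_nf
    _ ≤ B * |b - a| * ‖b - a‖ := key
    _ = B * (b - a) ^ 2 := by rw [Real.norm_eq_abs, mul_assoc, habs]

/-- Orthogonality of the weak limit to the constraint gradients: if
`f_n = f₀ + σ_n g_n ≥ 0` and `∫∫ Φ(f_n, L) = ∫∫ Φ(f₀, L)` for a Casimir `Φ` with bounded
second `f`-derivative, with `σ_n → 0`, `(g_n)` bounded in `L²` and `g_n → g` in `L²`,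
and `∂_fΦ(f₀, L)` bounded with compact support, then `∫∫ ∂_fΦ(f₀, L) g = 0`. -/
theorem constraint_orthogonality
    (f₀ g : (Fin 6 → ℝ) → ℝ) (gs : ℕ → (Fin 6 → ℝ) → ℝ)
    (σ : ℕ → ℝ) (hσpos : ∀ n, 0 < σ n) (hσ : Tendsto σ atTop (𝓝 0))
    (L : (Fin 6 → ℝ) → ℝ) (hLm : Measurable L) (hLnn : ∀ x, 0 ≤ L x)
    (hf₀nn : ∀ x, 0 ≤ f₀ x) (hfnnn : ∀ n x, 0 ≤ f₀ x + σ n * gs n x)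
    (hgsL2 : ∀ n, MemLp (gs n) 2 (volume : Measure (Fin 6 → ℝ)))
    (hgL2 : MemLp g 2 (volume : Measure (Fin 6 → ℝ)))
    (B2 : ℝ) (hbdd : ∀ n, ∫ x, gs n x ^ 2 ≤ B2)
    (hconv : Tendsto (fun n => eLpNorm (gs n - g) 2 volume) atTop (𝓝 0))
    (Φ D D2 : ℝ → ℝ → ℝ)
    (hΦ : ContDiffOn ℝ 2 (fun p : ℝ × ℝ => Φ p.1 p.2) (Set.Ici 0 ×ˢ Set.Ici 0))
    (hD : ∀ l ≥ (0:ℝ), ∀ s ≥ (0:ℝ), HasDerivAt (fun t => Φ t l) (D s l) s)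
    (hD2 : ∀ l ≥ (0:ℝ), ∀ s ≥ (0:ℝ), HasDerivAt (fun t => D t l) (D2 s l) s)
    (B : ℝ) (hD2bd : ∀ l ≥ (0:ℝ), ∀ s ≥ (0:ℝ), |D2 s l| ≤ B)
    (C : ℝ) (hDbd : ∀ x, |D (f₀ x) (L x)| ≤ C)
    (hDsupp : HasCompactSupport (fun x => D (f₀ x) (L x)))
    (hDmeas : Measurable (fun x => D (f₀ x) (L x)))
    (hint₀ : Integrable (fun x => Φ (f₀ x) (L x)))
    (hintn : ∀ n, Integrable (fun x => Φ (f₀ x + σ n * gs n x) (L x)))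
    (hconstraint : ∀ n, ∫ x, Φ (f₀ x + σ n * gs n x) (L x) = ∫ x, Φ (f₀ x) (L x)) :
    ∫ x, D (f₀ x) (L x) * g x = 0 := by
  set Df : (Fin 6 → ℝ) → ℝ := fun x => D (f₀ x) (L x) with hDf
  have hB : 0 ≤ B := le_trans (abs_nonneg _) (hD2bd 0 le_rfl 0 le_rfl)
  -- Df is in L²
  have hDL2 : MemLp Df 2 (volume : Measure (Fin 6 → ℝ)) :=
    hDsupp.memLp_of_bound hDmeas.aestronglyMeasurable C
      (Filter.Eventually.of_forall fun x => by simpa [Real.norm_eq_abs] using hDbd x)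
  -- Df * h is integrable for h ∈ L²
  have intmul : ∀ h : (Fin 6 → ℝ) → ℝ, MemLp h 2 (volume : Measure (Fin 6 → ℝ)) →
      Integrable (fun x => Df x * h x) := by
    intro h hh
    rw [← memLp_one_iff_integrable]
    refine ⟨hDL2.1.mul hh.1, ?_⟩
    have hhold : eLpNorm (Df • h) 1 volume ≤ eLpNorm Df 2 volume * eLpNorm h 2 volume :=
      eLpNorm_smul_le_mul_eLpNorm hh.1 hDL2.1
    have : eLpNorm (fun x => Df x * h x) 1 volume ≤
        eLpNorm Df 2 volume * eLpNorm h 2 volume := hhold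
    exact lt_of_le_of_lt this (ENNReal.mul_lt_top hDL2.2 hh.2)
  -- the key quantitative bound on ∫ Df * gs n
  have key : ∀ n, |∫ x, Df x * gs n x| ≤ B * B2 * σ n := by
    intro n
    have hs := hσpos n
    set R : (Fin 6 → ℝ) → ℝ :=
      fun x => Φ (f₀ x + σ n * gs n x) (L x) - Φ (f₀ x) (L x) - Df x * (σ n * gs n x) with hR
    have hptwise : ∀ x, |R x| ≤ B * σ n ^ 2 * gs n x ^ 2 := by
      intro x
      have := taylor_bd hD hD2 hD2bd (hLnn x) (hf₀nn x) (hfnnn n x)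
        (l := L x) (a := f₀ x) (b := f₀ x + σ n * gs n x)
      have hba : f₀ x + σ n * gs n x - f₀ x = σ n * gs n x := by ring
      rw [hba] at this
      calc |R x| ≤ B * (σ n * gs n x) ^ 2 := this
        _ = B * σ n ^ 2 * gs n x ^ 2 := by ring
    have hIg : Integrable (fun x => Df x * gs n x) := intmul _ (hgsL2 n)
    have hIg' : Integrable (fun x => Df x * (σ n * gs n x)) := by
      have : (fun x => Df x * (σ n * gs n x)) = fun x => σ n * (Df x * gs n x) := by
        funext x; ring
      rw [this]; exact hIg.const_mul _
    have hIR : Integrable R := ((hintn n).sub hint₀).sub hIg'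
    have hIsq : Integrable (fun x => B * σ n ^ 2 * gs n x ^ 2) :=
      ((hgsL2 n).integrable_sq).const_mul _
    have hI10 : Integrable (fun x => Φ (f₀ x + σ n * gs n x) (L x) - Φ (f₀ x) (L x)) :=
      (hintn n).sub hint₀
    have hintR : ∫ x, R x = -(σ n * ∫ x, Df x * gs n x) := by
      have h1 : ∫ x, R x =
          (∫ x, (Φ (f₀ x + σ n * gs n x) (L x) - Φ (f₀ x) (L x))) -
            ∫ x, Df x * (σ n * gs n x) := integral_sub hI10 hIg'
      have h2 : ∫ x, (Φ (f₀ x + σ n * gs n x) (L x) - Φ (f₀ x) (L x)) = 0 := by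
        rw [integral_sub (hintn n) hint₀, hconstraint n, sub_self]
      have h3 : ∫ x, Df x * (σ n * gs n x) = σ n * ∫ x, Df x * gs n x := by
        rw [← integral_const_mul]
        congr 1; funext x; ring
      rw [h1, h2, h3]; ring
    have habs : |∫ x, R x| ≤ B * σ n ^ 2 * B2 := by
      calc |∫ x, R x| ≤ ∫ x, B * σ n ^ 2 * gs n x ^ 2 := by
            rw [← Real.norm_eq_abs]
            exact norm_integral_le_of_norm_le hIsq
              (Filter.Eventually.of_forall fun x => by
                simpa [Real.norm_eq_abs] using hptwise x)
        _ = B * σ n ^ 2 * ∫ x, gs n x ^ 2 := integral_const_mul _ _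
        _ ≤ B * σ n ^ 2 * B2 :=
            mul_le_mul_of_nonneg_left (hbdd n) (by positivity)
    rw [hintR, abs_neg, abs_mul, abs_of_pos hs] at habs
    have := (mul_le_mul_iff_right₀ hs).mp (by nlinarith : σ n * |∫ x, Df x * gs n x| ≤ σ n * (B * B2 * σ n))
    linarith
  -- ∫ Df * gs n → ∫ Df * g
  have h1 : Tendsto (fun n => ∫ x, Df x * gs n x) atTop (𝓝 (∫ x, Df x * g x)) := by
    refine tendsto_integral_of_L1' _ (intmul g hgL2).aestronglyMeasurable
      (Filter.Eventually.of_forall fun n => intmul _ (hgsL2 n)) ?_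
    have hle : ∀ n, eLpNorm ((fun x => Df x * gs n x) - fun x => Df x * g x) 1 volume ≤
        eLpNorm Df 2 volume * eLpNorm (gs n - g) 2 volume := by
      intro n
      have heq : ((fun x => Df x * gs n x) - fun x => Df x * g x) = Df • (gs n - g) := by
        funext x; simp [Pi.sub_apply, mul_sub]
      rw [heq]
      exact eLpNorm_smul_le_mul_eLpNorm ((hgsL2 n).1.sub hgL2.1) hDL2.1
    have hmul : Tendsto (fun n => eLpNorm Df 2 volume * eLpNorm (gs n - g) 2 volume)
        atTop (𝓝 0) := by
      have := ENNReal.Tendsto.const_mul (a := eLpNorm Df 2 volume) hconv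
        (Or.inr hDL2.2.ne)
      simpa using this
    exact tendsto_of_tendsto_of_tendsto_of_le_of_le tendsto_const_nhds hmul
      (fun n => zero_le) hle
  -- ∫ Df * gs n → 0
  have h2 : Tendsto (fun n => ∫ x, Df x * gs n x) atTop (𝓝 0) := by
    refine squeeze_zero_norm (fun n => by simpa [Real.norm_eq_abs] using key n) ?_
    have := hσ.const_mul (B * B2)
    simpa using this
  exact tendsto_nhds_unique h1 h2
end
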